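/- Let G_S be a rooted graph, λ := −lim_{ℓ→∞} λ₁(G_S, ℓ), and assume λ₁(G) > −λ. Then for every ℓ ∈ ℕ, the smallest eigenvalue of the path extension (G_S, ℓ) is strictly greater than −λ. -/

import Mathlib

open Matrix Filter
open scoped Classical

noncomputable def adjM {α : Type*} [Fintype α] (G : SimpleGraph α) : Matrix α α ℝ :=
  fun x y => if G.Adj x y then 1 else 0

noncomputable def minEig {α : Type*} [Fintype α] (G : SimpleGraph α) : ℝ :=
  sInf {μ : ℝ | ∃ x : α → ℝ, x ≠ 0 ∧ adjM G *ᵥ x = μ • x}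

/-- The path extension `(F_R, ℓ)`: add a path `v_0 … v_ℓ` (vertices `Fin (ℓ+1)`) to `F`,
joining `v_0` to every vertex of the root set `R`. -/
def pathExt {V : Type*} (F : SimpleGraph V) (R : Set V) (ℓ : ℕ) :
    SimpleGraph (V ⊕ Fin (ℓ + 1)) :=
  SimpleGraph.fromRel (fun x y =>
    match x, y with
    | Sum.inl u, Sum.inl v => F.Adj u v
    | Sum.inl u, Sum.inr i => u ∈ R ∧ (i : ℕ) = 0
    | Sum.inr i, Sum.inr j => (j : ℕ) = (i : ℕ) + 1
    | _, _ => False)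

noncomputable section
namespace S14
open scoped InnerProductSpace

variable {n : Type*} [Fintype n]

def eigSet (A : Matrix n n ℝ) : Set ℝ := {μ | ∃ x : n → ℝ, x ≠ 0 ∧ A *ᵥ x = μ • x}

noncomputable def raymin (A : Matrix n n ℝ) : ℝ :=
  ⨅ x : { x : EuclideanSpace ℝ n // x ≠ 0 },
    RCLike.re ⟪Matrix.toEuclideanLin A x, (x : EuclideanSpace ℝ n)⟫_ℝ / ‖(x : EuclideanSpace ℝ n)‖ ^ 2

lemma inner_eq_dot (x y : EuclideanSpace ℝ n) :
    ⟪x, y⟫_ℝ = (x : n → ℝ) ⬝ᵥ (y : n → ℝ) := by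
  simp [PiLp.inner_apply, dotProduct, mul_comm]

lemma toEuc_apply (A : Matrix n n ℝ) (x : EuclideanSpace ℝ n) :
    Matrix.toEuclideanLin A x = (WithLp.toLp 2 (A *ᵥ x) : EuclideanSpace ℝ n) := rfl

lemma norm_sq_eq (x : EuclideanSpace ℝ n) : ‖x‖ ^ 2 = (x : n → ℝ) ⬝ᵥ (x : n → ℝ) := by
  rw [← real_inner_self_eq_norm_sq, inner_eq_dot]



lemma raymin_bddBelow (A : Matrix n n ℝ) :
    BddBelow (Set.range fun x : { x : EuclideanSpace ℝ n // x ≠ 0 } =>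
      RCLike.re ⟪Matrix.toEuclideanLin A x, (x : EuclideanSpace ℝ n)⟫_ℝ / ‖(x : EuclideanSpace ℝ n)‖ ^ 2) := by
  classical
  set T := (Matrix.toEuclideanLin A).toContinuousLinearMap with hT
  refine ⟨-‖T‖, ?_⟩
  rintro r ⟨⟨x, hx⟩, rfl⟩
  have hx2 : (0:ℝ) < ‖x‖ ^ 2 := by
    have : (0:ℝ) < ‖x‖ := norm_pos_iff.mpr hx
    positivity
  dsimp only
  rw [RCLike.re_to_real, le_div_iff₀ hx2]
  have h1 : |⟪Matrix.toEuclideanLin A x, x⟫_ℝ| ≤ ‖Matrix.toEuclideanLin A x‖ * ‖x‖ :=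
    abs_real_inner_le_norm _ _
  have h2 : ‖Matrix.toEuclideanLin A x‖ ≤ ‖T‖ * ‖x‖ := T.le_opNorm x
  nlinarith [(abs_le.mp h1).1, norm_nonneg x, norm_nonneg (Matrix.toEuclideanLin A x)]

lemma raymin_le (A : Matrix n n ℝ) (x : n → ℝ) (hx : x ≠ 0) :
    raymin A ≤ ((A *ᵥ x) ⬝ᵥ x) / (x ⬝ᵥ x) := by
  have hx' : (WithLp.toLp 2 x : EuclideanSpace ℝ n) ≠ 0 := by simpa using hx
  have h := ciInf_le (raymin_bddBelow A) (⟨WithLp.toLp 2 x, hx'⟩ : { x : EuclideanSpace ℝ n // x ≠ 0 })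
  rw [raymin]
  refine le_trans h (le_of_eq ?_)
  dsimp only
  rw [RCLike.re_to_real, toEuc_apply, inner_eq_dot, norm_sq_eq]

lemma dot_self_pos {x : n → ℝ} (hx : x ≠ 0) : 0 < x ⬝ᵥ x := by
  have h := norm_sq_eq (WithLp.toLp 2 x : EuclideanSpace ℝ n)
  rw [← h]
  have : (WithLp.toLp 2 x : EuclideanSpace ℝ n) ≠ 0 := by simpa using hx
  have : (0:ℝ) < ‖(WithLp.toLp 2 x : EuclideanSpace ℝ n)‖ := norm_pos_iff.mpr this
  positivity

lemma raymin_lb (A : Matrix n n ℝ) {μ : ℝ} (hμ : μ ∈ eigSet A) : raymin A ≤ μ := by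
  obtain ⟨x, hx, hAx⟩ := hμ
  have h := raymin_le A x hx
  rwa [hAx, smul_dotProduct, smul_eq_mul, mul_div_assoc,
    div_self (ne_of_gt (dot_self_pos hx)), mul_one] at h

lemma raymin_mem [Nonempty n] {A : Matrix n n ℝ} (hA : A.IsHermitian) :
    raymin A ∈ eigSet A := by
  have hsym := (Matrix.isHermitian_iff_isSymmetric).1 hA
  haveI : Nontrivial (EuclideanSpace ℝ n) := by
    obtain ⟨i⟩ := ‹Nonempty n›
    exact ⟨0, EuclideanSpace.single i 1, by
      intro h
      have := congrFun (congrArg WithLp.ofLp h.symm) i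
      simp [EuclideanSpace.single_apply] at this⟩
  have h := hsym.hasEigenvalue_iInf_of_finiteDimensional
  obtain ⟨v, hv⟩ := h.exists_hasEigenvector
  refine ⟨v, by simpa using hv.right, ?_⟩
  have h2 := hv.apply_eq_smul
  rw [toEuc_apply] at h2
  have : A *ᵥ (v : n → ℝ) = raymin A • (v : n → ℝ) := congrArg WithLp.ofLp h2
  simpa [raymin] using this

lemma sInf_eigSet [Nonempty n] {A : Matrix n n ℝ} (hA : A.IsHermitian) :
    sInf (eigSet A) = raymin A := by
  refine le_antisymm (csInf_le ⟨raymin A, fun μ hμ => raymin_lb A hμ⟩ (raymin_mem hA))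
    (le_csInf ⟨raymin A, raymin_mem hA⟩ fun μ hμ => raymin_lb A hμ)

lemma minimizer_is_eig [Nonempty n] {A : Matrix n n ℝ} (hA : A.IsHermitian)
    {x : n → ℝ} (hx : x ≠ 0) (hq : (A *ᵥ x) ⬝ᵥ x = raymin A * (x ⬝ᵥ x)) :
    A *ᵥ x = raymin A • x := by
  set c := raymin A with hc
  set B := A - c • (1 : Matrix n n ℝ) with hB
  have hBmul : ∀ z : n → ℝ, B *ᵥ z = A *ᵥ z - c • z := by
    intro z
    rw [hB, sub_mulVec, smul_mulVec, one_mulVec]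
  have hBpsd : B.PosSemidef := by
    refine Matrix.PosSemidef.of_dotProduct_mulVec_nonneg ?_ ?_
    · rw [hB, Matrix.IsHermitian, conjTranspose_sub, hA.eq, conjTranspose_smul]
      simp
    · intro z
      rw [star_trivial, hBmul z, dotProduct_sub, dotProduct_smul, smul_eq_mul, sub_nonneg]
      by_cases hz : z = 0
      · simp [hz]
      · have h := raymin_le A z hz
        rw [← hc, le_div_iff₀ (dot_self_pos hz)] at h
        calc c * (z ⬝ᵥ z) ≤ (A *ᵥ z) ⬝ᵥ z := h
        _ = z ⬝ᵥ (A *ᵥ z) := dotProduct_comm _ _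
  have h0 : star x ⬝ᵥ B *ᵥ x = 0 := by
    rw [star_trivial, hBmul x, dotProduct_sub, dotProduct_smul, smul_eq_mul,
      dotProduct_comm x (A *ᵥ x), hq]
    ring
  have := (hBpsd.dotProduct_mulVec_zero_iff x).1 h0
  rw [hBmul x] at this
  have := sub_eq_zero.mp this
  exact this

lemma adjM_isHermitian {α : Type*} [Fintype α] (G : SimpleGraph α) :
    (adjM G).IsHermitian := by
  ext i j
  simp only [conjTranspose_apply, adjM, star_trivial]
  by_cases h : G.Adj j i
  · simp [h, h.symm]
  · have h' : ¬ G.Adj i j := fun hh => h hh.symm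
    simp [h, h']


section Comb
variable {W : Type*} [Fintype W] (G : SimpleGraph W) (S : Set W)

lemma adj_inl_inl (m : ℕ) (u v : W) :
    (pathExt G S m).Adj (Sum.inl u) (Sum.inl v) ↔ G.Adj u v := by
  simp only [pathExt, SimpleGraph.fromRel_adj]
  constructor
  · rintro ⟨-, h | h⟩
    · exact h
    · exact h.symm
  · intro h
    exact ⟨by simp [h.ne], Or.inl h⟩

lemma adj_inl_inr (m : ℕ) (u : W) (i : Fin (m+1)) :
    (pathExt G S m).Adj (Sum.inl u) (Sum.inr i) ↔ (u ∈ S ∧ (i:ℕ) = 0) := by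
  simp [pathExt, SimpleGraph.fromRel_adj]

lemma adj_inr_inl (m : ℕ) (u : W) (i : Fin (m+1)) :
    (pathExt G S m).Adj (Sum.inr i) (Sum.inl u) ↔ (u ∈ S ∧ (i:ℕ) = 0) := by
  rw [SimpleGraph.adj_comm]
  exact adj_inl_inr G S m u i

lemma adj_inr_inr (m : ℕ) (i j : Fin (m+1)) :
    (pathExt G S m).Adj (Sum.inr i) (Sum.inr j) ↔ ((j:ℕ) = (i:ℕ)+1 ∨ (i:ℕ) = (j:ℕ)+1) := by
  simp only [pathExt, SimpleGraph.fromRel_adj]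
  constructor
  · rintro ⟨-, h⟩; exact h
  · intro h
    refine ⟨?_, h⟩
    intro he
    rw [Sum.inr.injEq] at he
    subst he
    omega

lemma finsum_ite (N c : ℕ) (g : Fin N → ℝ) :
    ∑ i : Fin N, (if (i:ℕ) = c then 1 else 0) * g i = if h : c < N then g ⟨c, h⟩ else 0 := by
  split_ifs with h
  · rw [Finset.sum_eq_single (⟨c, h⟩ : Fin N)]
    · simp
    · intro i _ hne
      have : (i:ℕ) ≠ c := fun hh => hne (Fin.ext hh)
      simp [this]
    · simp
  · apply Finset.sum_eq_zero
    intro i _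
    have : (i:ℕ) ≠ c := by omega
    simp [this]

lemma mulVec_apply' {α : Type*} [Fintype α] (A : Matrix α α ℝ) (z : α → ℝ) (u : α) :
    (A *ᵥ z) u = ∑ w, A u w * z w := rfl

lemma mulVec_inl (m : ℕ) (z : (W ⊕ Fin (m+1)) → ℝ) (u : W) :
    (adjM (pathExt G S m) *ᵥ z) (Sum.inl u) =
      (∑ v, (if G.Adj u v then 1 else 0) * z (Sum.inl v))
        + (if u ∈ S then z (Sum.inr 0) else 0) := by
  rw [mulVec_apply', Fintype.sum_sum_type]
  congr 1
  · apply Finset.sum_congr rfl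
    intro v _
    rw [adjM]
    simp only [adj_inl_inl]
  · have h1 : ∀ i : Fin (m+1), adjM (pathExt G S m) (Sum.inl u) (Sum.inr i)
        = if u ∈ S then (if (i:ℕ) = 0 then 1 else 0) else 0 := by
      intro i
      rw [adjM]
      simp only [adj_inl_inr]
      by_cases hu : u ∈ S <;> by_cases hi : (i:ℕ) = 0 <;> simp [hu, hi]
    simp only [h1]
    by_cases hu : u ∈ S
    · simp only [hu, if_true]
      rw [finsum_ite m.succ 0 (fun i => z (Sum.inr i))]
      simp [Fin.ext_iff]
    · simp [hu]

lemma mulVec_inr (m : ℕ) (z : (W ⊕ Fin (m+1)) → ℝ) (j : Fin (m+1)) :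
    (adjM (pathExt G S m) *ᵥ z) (Sum.inr j) =
      (if (j:ℕ) = 0 then ∑ u, (if u ∈ S then 1 else 0) * z (Sum.inl u) else 0)
      + (if h : (j:ℕ)+1 < m+1 then z (Sum.inr ⟨(j:ℕ)+1, h⟩) else 0)
      + (if (j:ℕ) ≠ 0 then z (Sum.inr ⟨(j:ℕ)-1, by omega⟩) else 0) := by
  rw [mulVec_apply', Fintype.sum_sum_type]
  have h1 : ∀ u : W, adjM (pathExt G S m) (Sum.inr j) (Sum.inl u)
      = if (j:ℕ) = 0 then (if u ∈ S then 1 else 0) else 0 := by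
    intro u
    rw [adjM]
    simp only [adj_inr_inl]
    by_cases hu : u ∈ S <;> by_cases hj : (j:ℕ) = 0 <;> simp [hu, hj]
  have h2 : ∀ i : Fin (m+1), adjM (pathExt G S m) (Sum.inr j) (Sum.inr i)
      = (if (i:ℕ) = (j:ℕ)+1 then (1:ℝ) else 0) + (if (j:ℕ) = (i:ℕ)+1 then 1 else 0) := by
    intro i
    rw [adjM]
    simp only [adj_inr_inr]
    by_cases hA : (i:ℕ) = (j:ℕ)+1 <;> by_cases hB : (j:ℕ) = (i:ℕ)+1
    · omega
    · rw [if_pos (Or.inl hA), if_pos hA, if_neg hB, add_zero]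
    · rw [if_pos (Or.inr hB), if_neg hA, if_pos hB, zero_add]
    · rw [if_neg (not_or.mpr ⟨hA, hB⟩), if_neg hA, if_neg hB, add_zero]
  simp only [h1, h2]
  rw [add_assoc]
  congr 1
  · by_cases hj : (j:ℕ) = 0
    · simp [hj]
    · simp [hj]
  · simp only [add_mul]
    rw [Finset.sum_add_distrib]
    congr 1
    · rw [finsum_ite (m+1) ((j:ℕ)+1) (fun i => z (Sum.inr i))]
    · by_cases hj : (j:ℕ) = 0
      · simp only [hj]
        have : ∀ i : Fin (m+1), (if (0:ℕ) = (i:ℕ)+1 then (1:ℝ) else 0) * z (Sum.inr i) = 0 := by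
          intro i; simp
        rw [Finset.sum_congr rfl (fun i _ => this i)]
        simp
      · have hcong : ∀ i : Fin (m+1), (if (j:ℕ) = (i:ℕ)+1 then (1:ℝ) else 0) * z (Sum.inr i)
            = (if (i:ℕ) = (j:ℕ)-1 then (1:ℝ) else 0) * z (Sum.inr i) := by
          intro i
          have : ((j:ℕ) = (i:ℕ)+1) ↔ ((i:ℕ) = (j:ℕ)-1) := by omega
          rw [if_congr this rfl rfl]
        rw [Finset.sum_congr rfl (fun i _ => hcong i),
          finsum_ite (m+1) ((j:ℕ)-1) (fun i => z (Sum.inr i))]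
        have hlt : (j:ℕ)-1 < m+1 := by omega
        rw [dif_pos hlt, if_pos hj]

end Comb

section Ext
variable {W : Type*} [Fintype W] (G : SimpleGraph W) (S : Set W)

def extv {W : Type*} (ℓ : ℕ) (x : (W ⊕ Fin (ℓ+1)) → ℝ) : (W ⊕ Fin (ℓ+2)) → ℝ :=
  Sum.elim (fun v => x (Sum.inl v))
    (fun i => if h : (i:ℕ) < ℓ+1 then x (Sum.inr ⟨(i:ℕ), h⟩) else 0)

lemma extv_inl {ℓ : ℕ} (x : (W ⊕ Fin (ℓ+1)) → ℝ) (v : W) :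
    extv ℓ x (Sum.inl v) = x (Sum.inl v) := rfl

lemma extv_castSucc {ℓ : ℕ} (x : (W ⊕ Fin (ℓ+1)) → ℝ) (i : Fin (ℓ+1)) :
    extv ℓ x (Sum.inr (Fin.castSucc i)) = x (Sum.inr i) := by
  simp [extv]
  intro h; omega

lemma extv_last {ℓ : ℕ} (x : (W ⊕ Fin (ℓ+1)) → ℝ) :
    extv ℓ x (Sum.inr (Fin.last (ℓ+1))) = 0 := by
  simp [extv]

lemma extv_zero {ℓ : ℕ} (x : (W ⊕ Fin (ℓ+1)) → ℝ) :
    extv ℓ x (Sum.inr 0) = x (Sum.inr 0) := by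
  have : (0 : Fin (ℓ+2)) = Fin.castSucc 0 := rfl
  rw [this, extv_castSucc]

lemma ext_mulVec_inl (ℓ : ℕ) (x : (W ⊕ Fin (ℓ+1)) → ℝ) (u : W) :
    (adjM (pathExt G S (ℓ+1)) *ᵥ extv ℓ x) (Sum.inl u)
      = (adjM (pathExt G S ℓ) *ᵥ x) (Sum.inl u) := by
  rw [mulVec_inl, mulVec_inl, extv_zero]
  simp only [extv_inl]

lemma ext_mulVec_inr (ℓ : ℕ) (x : (W ⊕ Fin (ℓ+1)) → ℝ) (j : Fin (ℓ+1)) :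
    (adjM (pathExt G S (ℓ+1)) *ᵥ extv ℓ x) (Sum.inr (Fin.castSucc j))
      = (adjM (pathExt G S ℓ) *ᵥ x) (Sum.inr j) := by
  rw [mulVec_inr, mulVec_inr]
  simp only [Fin.coe_castSucc, extv_inl]
  congr 1
  · congr 1
    rw [dif_pos (show (j:ℕ)+1 < ℓ+1+1 by omega)]
    simp only [extv, Sum.elim_inr]
  · by_cases hj : (j:ℕ) = 0
    · simp [hj]
    · rw [if_pos hj, if_pos hj]
      simp only [extv, Sum.elim_inr]
      rw [dif_pos (show (j:ℕ)-1 < ℓ+1 by omega)]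

lemma dot_extv (ℓ : ℕ) (x : (W ⊕ Fin (ℓ+1)) → ℝ) :
    extv ℓ x ⬝ᵥ extv ℓ x = x ⬝ᵥ x := by
  simp only [dotProduct, Fintype.sum_sum_type]
  congr 1
  rw [Fin.sum_univ_castSucc]
  simp [extv_castSucc, extv_last]

lemma quad_extv (ℓ : ℕ) (x : (W ⊕ Fin (ℓ+1)) → ℝ) :
    (adjM (pathExt G S (ℓ+1)) *ᵥ extv ℓ x) ⬝ᵥ extv ℓ x
      = (adjM (pathExt G S ℓ) *ᵥ x) ⬝ᵥ x := by
  simp only [dotProduct, Fintype.sum_sum_type]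
  congr 1
  · apply Finset.sum_congr rfl
    intro v _
    rw [ext_mulVec_inl, extv_inl]
  · rw [Fin.sum_univ_castSucc]
    rw [extv_last]
    rw [mul_zero, add_zero]
    apply Finset.sum_congr rfl
    intro i _
    rw [ext_mulVec_inr, extv_castSucc]

lemma extv_ne_zero {ℓ : ℕ} {x : (W ⊕ Fin (ℓ+1)) → ℝ} (hx : x ≠ 0) : extv ℓ x ≠ 0 := by
  intro h
  apply hx
  funext w
  cases w with
  | inl v => exact congrFun h (Sum.inl v)
  | inr i => calc x (Sum.inr i) = extv ℓ x (Sum.inr (Fin.castSucc i)) := (extv_castSucc x i).symm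
      _ = 0 := congrFun h _

end Ext

section Main
variable {W : Type*} [Fintype W] (G : SimpleGraph W) (S : Set W)

lemma minEig_def {α : Type*} [Fintype α] (H : SimpleGraph α) :
    minEig H = sInf (eigSet (adjM H)) := rfl

lemma minEig_eq_raymin {α : Type*} [Fintype α] [Nonempty α] (H : SimpleGraph α) :
    minEig H = raymin (adjM H) := by
  rw [minEig_def, sInf_eigSet (adjM_isHermitian H)]

lemma minEig_mem {α : Type*} [Fintype α] [Nonempty α] (H : SimpleGraph α) :
    ∃ x, x ≠ 0 ∧ adjM H *ᵥ x = minEig H • x := by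
  rw [minEig_eq_raymin]
  exact raymin_mem (adjM_isHermitian H)

lemma minEig_le_of_eig {α : Type*} [Fintype α] {H : SimpleGraph α} {μ : ℝ} {x : α → ℝ}
    (hx : x ≠ 0) (h : adjM H *ᵥ x = μ • x) : minEig H ≤ μ := by
  rw [minEig_def]
  exact csInf_le ⟨raymin (adjM H), fun ν hν => raymin_lb _ hν⟩ ⟨x, hx, h⟩

lemma mono (ℓ : ℕ) : minEig (pathExt G S (ℓ+1)) ≤ minEig (pathExt G S ℓ) := by
  haveI : Nonempty (W ⊕ Fin (ℓ+1)) := ⟨Sum.inr 0⟩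
  haveI : Nonempty (W ⊕ Fin (ℓ+2)) := ⟨Sum.inr 0⟩
  obtain ⟨x, hx, hAx⟩ := minEig_mem (pathExt G S ℓ)
  set c := minEig (pathExt G S ℓ) with hc
  have hy := extv_ne_zero hx
  have hq : (adjM (pathExt G S (ℓ+1)) *ᵥ extv ℓ x) ⬝ᵥ extv ℓ x
      = c * (extv ℓ x ⬝ᵥ extv ℓ x) := by
    rw [quad_extv, dot_extv, hAx, smul_dotProduct, smul_eq_mul]
  have h1 : minEig (pathExt G S (ℓ+1))
      ≤ ((adjM (pathExt G S (ℓ+1)) *ᵥ extv ℓ x) ⬝ᵥ extv ℓ x) / (extv ℓ x ⬝ᵥ extv ℓ x) := by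
    rw [minEig_eq_raymin]
    exact raymin_le _ _ hy
  rwa [hq, mul_div_assoc, div_self (ne_of_gt (dot_self_pos hy)), mul_one] at h1

end Main
end S14

open S14 in
/-- If `λ = -lim_{ℓ→∞} λ₁(G_S, ℓ)` and `λ₁(G) > -λ`, then every path extension
`(G_S, ℓ)` has smallest eigenvalue strictly greater than `-λ`. -/
theorem stmt14 {W : Type*} [Fintype W] (G : SimpleGraph W) (S : Set W) (hS : S.Nonempty)
    (lam : ℝ)
    (hlim : Filter.Tendsto (fun ℓ => minEig (pathExt G S ℓ)) Filter.atTop (nhds (-lam)))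
    (hG : -lam < minEig G) :
    ∀ ℓ : ℕ, -lam < minEig (pathExt G S ℓ) := by
  intro ℓ
  have hanti : Antitone fun k => minEig (pathExt G S k) :=
    antitone_nat_of_succ_le fun k => mono G S k
  have hlb : ∀ k, -lam ≤ minEig (pathExt G S k) := fun k =>
    le_of_tendsto hlim (Filter.eventually_atTop.2 ⟨k, fun m hm => hanti hm⟩)
  rcases (hlb ℓ).lt_or_eq with h | h
  · exact h
  exfalso
  haveI : Nonempty W := ⟨hS.choose⟩
  haveI : Nonempty (W ⊕ Fin (ℓ+1)) := ⟨Sum.inr 0⟩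
  haveI : Nonempty (W ⊕ Fin (ℓ+2)) := ⟨Sum.inr 0⟩
  -- h : -lam = minEig (pathExt G S ℓ)
  have hsucc : minEig (pathExt G S (ℓ+1)) = -lam :=
    le_antisymm (h ▸ mono G S ℓ) (hlb (ℓ+1))
  obtain ⟨x, hx, hAx⟩ := minEig_mem (pathExt G S ℓ)
  rw [← h] at hAx
  have hyne := extv_ne_zero (W := W) hx
  have hq : (adjM (pathExt G S (ℓ+1)) *ᵥ extv ℓ x) ⬝ᵥ extv ℓ x
      = raymin (adjM (pathExt G S (ℓ+1))) * (extv ℓ x ⬝ᵥ extv ℓ x) := by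
    rw [quad_extv, dot_extv, hAx, smul_dotProduct, smul_eq_mul, ← minEig_eq_raymin, hsucc]
  have heig := minimizer_is_eig (adjM_isHermitian (pathExt G S (ℓ+1))) hyne hq
  rw [← minEig_eq_raymin, hsucc] at heig
  -- top vertex gives x (inr (last ℓ)) = 0
  have hxtop : x (Sum.inr (Fin.last ℓ)) = 0 := by
    have htop := congrFun heig (Sum.inr (Fin.last (ℓ+1)))
    rw [mulVec_inr] at htop
    simp only [Fin.val_last, Pi.smul_apply, smul_eq_mul] at htop
    rw [extv_last] at htop
    rw [if_neg (by omega : ¬ (ℓ+1 = 0)), dif_neg (by omega : ¬ (ℓ+1+1 < ℓ+1+1)),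
      if_pos (by omega : (ℓ+1:ℕ) ≠ 0)] at htop
    have hmk : (⟨ℓ+1-1, by omega⟩ : Fin (ℓ+2)) = Fin.castSucc (Fin.last ℓ) := by
      apply Fin.ext; simp
    rw [hmk, extv_castSucc] at htop
    simpa using htop
  -- propagation: x vanishes on the whole path
  have hzero : ∀ j : Fin (ℓ+1), x (Sum.inr j) = 0 := by
    have key : ∀ t, t ≤ ℓ → x (Sum.inr ⟨ℓ - t, by omega⟩) = 0 := by
      intro t
      induction t using Nat.strong_induction_on with
      | _ t IH =>
        intro ht
        match t, ht with
        | 0, ht =>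
          have he : (⟨ℓ - 0, by omega⟩ : Fin (ℓ+1)) = Fin.last ℓ := by
            apply Fin.ext
            show ℓ - 0 = ℓ
            omega
          rw [he]
          exact hxtop
        | Nat.succ s, ht =>
          have hs : s ≤ ℓ := by omega
          have hsl : s < ℓ := by omega
          have hj := congrFun hAx (Sum.inr (⟨ℓ - s, by omega⟩ : Fin (ℓ+1)))
          rw [mulVec_inr] at hj
          simp only [Pi.smul_apply, smul_eq_mul] at hj
          rw [if_neg (show ¬ ((⟨ℓ - s, by omega⟩ : Fin (ℓ+1)) : ℕ) = 0 from by
              show ¬ (ℓ - s = 0); omega),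
            if_pos (show ((⟨ℓ - s, by omega⟩ : Fin (ℓ+1)) : ℕ) ≠ 0 from by
              show ℓ - s ≠ 0; omega)] at hj
          rw [IH s (by omega) hs] at hj
          by_cases hs0 : s = 0
          · subst hs0
            rw [dif_neg (show ¬ (((⟨ℓ - 0, by omega⟩ : Fin (ℓ+1)) : ℕ) + 1 < ℓ+1) from by
                show ¬ (ℓ - 0 + 1 < ℓ + 1); omega)] at hj
            have hmk : (⟨((⟨ℓ - 0, by omega⟩ : Fin (ℓ+1)) : ℕ) - 1, by omega⟩ : Fin (ℓ+1))
                = (⟨ℓ - (0+1), by omega⟩ : Fin (ℓ+1)) := by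
              apply Fin.ext
              show ℓ - 0 - 1 = ℓ - (0+1)
              omega
            rw [hmk] at hj
            linarith [hj]
          · rw [dif_pos (show (((⟨ℓ - s, by omega⟩ : Fin (ℓ+1)) : ℕ) + 1 < ℓ+1) from by
                show ℓ - s + 1 < ℓ + 1; omega)] at hj
            have hmk1 : (⟨((⟨ℓ - s, by omega⟩ : Fin (ℓ+1)) : ℕ) + 1, by
                  show ℓ - s + 1 < ℓ + 1; omega⟩ : Fin (ℓ+1))
                = (⟨ℓ - (s-1), by omega⟩ : Fin (ℓ+1)) := by
              apply Fin.ext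
              show ℓ - s + 1 = ℓ - (s-1)
              omega
            rw [hmk1, IH (s-1) (by omega) (by omega)] at hj
            have hmk2 : (⟨((⟨ℓ - s, by omega⟩ : Fin (ℓ+1)) : ℕ) - 1, by omega⟩ : Fin (ℓ+1))
                = (⟨ℓ - (s+1), by omega⟩ : Fin (ℓ+1)) := by
              apply Fin.ext
              show ℓ - s - 1 = ℓ - (s+1)
              omega
            rw [hmk2] at hj
            linarith [hj]
    intro j
    have hj := key (ℓ - (j:ℕ)) (by omega)
    have he : (⟨ℓ - (ℓ - (j:ℕ)), by omega⟩ : Fin (ℓ+1)) = j := by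
      apply Fin.ext
      show ℓ - (ℓ - (j:ℕ)) = (j:ℕ)
      omega
    rwa [he] at hj
  -- restriction to G is an eigenvector with eigenvalue -lam
  have hrest : adjM G *ᵥ (fun v => x (Sum.inl v)) = (-lam) • (fun v => x (Sum.inl v)) := by
    funext u
    have hu := congrFun hAx (Sum.inl u)
    rw [mulVec_inl, hzero 0] at hu
    simp only [ite_self, add_zero, Pi.smul_apply, smul_eq_mul] at hu
    rw [mulVec_apply']
    simpa [adjM] using hu
  have hWne : (fun v => x (Sum.inl v)) ≠ 0 := by
    intro h0
    apply hx
    funext w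
    cases w with
    | inl v => exact congrFun h0 v
    | inr j => exact hzero j
  have hle := minEig_le_of_eig hWne hrest
  linarith
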